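/- Let (σ,ω) be a relatively simplicial pair in a lattice N, with σ = ⟨v₁,…,v_k, w₁,…,w_s⟩ and ω = ⟨w₁,…,w_s⟩ a face of σ. If there is no minimal vector of the pair (σ,ω) (i.e., every minimal vector of σ lies in ω), then the pair (σ,ω) is regular: N_σ = ℤv₁ ⊕ … ⊕ ℤv_k ⊕ N_ω, and the monoid σ ∩ N_σ equals ℕv₁ + … + ℕv_k + (ω ∩ N_ω). -/

import Mathlib

universe u

/-- The cone of all nonnegative rational combinations of a finite family of vectors. -/
def coneSpan {V : Type u} [AddCommGroup V] [Module ℚ V] {k : ℕ} (v : Fin k → V) : Set V :=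
  {x | ∃ c : Fin k → ℚ, (∀ i, 0 ≤ c i) ∧ x = ∑ i, c i • v i}

/-- A finitely generated cone is strictly convex if it contains no line,
i.e. `σ ∩ (−σ) = {0}`. -/
def StrictlyConvexCone {V : Type u} [AddCommGroup V] [Module ℚ V] {k : ℕ}
    (v : Fin k → V) : Prop :=
  ∀ x ∈ coneSpan v, -x ∈ coneSpan v → x = 0

/-- `w` is a primitive vector of the lattice `N`: a nonzero element of `N` generating the
monoid `ℚ≥0·w ∩ N`. -/
def IsPrimitive {V : Type u} [AddCommGroup V] [Module ℚ V] (N : Submodule ℤ V)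
    (w : V) : Prop :=
  w ∈ N ∧ w ≠ 0 ∧ ∀ x ∈ N, (∃ c : ℚ, 0 ≤ c ∧ x = c • w) → ∃ m : ℕ, x = (m : ℤ) • w

/-- `v` lists the vertices of the cone it spans: all entries are primitive and the number of
generators is minimal among generating families of the same cone. -/
def IsVertexFamily {V : Type u} [AddCommGroup V] [Module ℚ V] (N : Submodule ℤ V) {k : ℕ}
    (v : Fin k → V) : Prop :=
  (∀ i, IsPrimitive N (v i)) ∧
    ∀ (m : ℕ) (w : Fin m → V), coneSpan w = coneSpan v → k ≤ m

/-- The lattice `N_σ = N ∩ span_ℚ σ` of the cone spanned by `v`. -/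
def latticeOf {V : Type u} [AddCommGroup V] [Module ℚ V] (N : Submodule ℤ V) {k : ℕ}
    (v : Fin k → V) : Submodule ℤ V :=
  N ⊓ (Submodule.span ℚ (Set.range v)).restrictScalars ℤ

/-- The lattice `N ∩ span_ℚ S` of a subset `S`. -/
def latticeOfSet {V : Type u} [AddCommGroup V] [Module ℚ V] (N : Submodule ℤ V)
    (S : Set V) : Submodule ℤ V :=
  N ⊓ (Submodule.span ℚ S).restrictScalars ℤ

/-- A minimal vector of the cone spanned by `v`: a nonzero integral vector of the cone which
is not a vertex and cannot be written as a sum of two nonzero integral vectors of the cone. -/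
def IsMinimalVec {V : Type u} [AddCommGroup V] [Module ℚ V] (N : Submodule ℤ V) {k : ℕ}
    (v : Fin k → V) (x : V) : Prop :=
  x ∈ coneSpan v ∧ x ∈ N ∧ x ≠ 0 ∧ (∀ i, x ≠ v i) ∧
    ¬ ∃ y z : V, y ∈ coneSpan v ∧ y ∈ N ∧ y ≠ 0 ∧
      z ∈ coneSpan v ∧ z ∈ N ∧ z ≠ 0 ∧ x = y + z

/-- A small vector of the cone spanned by `v`: a nonzero integral vector of the cone which
cannot be written as a vertex plus an integral vector of the cone. -/
def IsSmallVec {V : Type u} [AddCommGroup V] [Module ℚ V] (N : Submodule ℤ V) {k : ℕ}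
    (v : Fin k → V) (x : V) : Prop :=
  x ∈ coneSpan v ∧ x ∈ N ∧ x ≠ 0 ∧
    ∀ i, ¬ ∃ y : V, y ∈ coneSpan v ∧ y ∈ N ∧ x = v i + y

/-- A cone is regular if its generators form part of a `ℤ`-basis of the lattice `N`. -/
def IsRegularCone {V : Type u} [AddCommGroup V] [Module ℚ V] (N : Submodule ℤ V) {k : ℕ}
    (v : Fin k → V) : Prop :=
  ∃ (ι : Type u) (b : Module.Basis ι ℤ ↥N) (f : Fin k → ι),
    Function.Injective f ∧ ∀ i, (b (f i) : V) = v i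

/-- The determinant of a simplicial cone, computed with respect to a `ℤ`-basis of its
lattice `N_σ`. -/
noncomputable def coneDet {V : Type u} [AddCommGroup V] [Module ℚ V] (N : Submodule ℤ V) {k : ℕ}
    (v : Fin k → V) (hv : ∀ i, v i ∈ latticeOf N v)
    (b : Module.Basis (Fin k) ℤ ↥(latticeOf N v)) : ℤ :=
  (Matrix.of fun i j => b.repr ⟨v j, hv j⟩ i).det

/-- `F` is a face of the cone `σ` (both given as subsets): the vanishing locus on `σ` of a
`ℚ`-linear functional which is nonnegative on `σ`. -/
def IsFaceOf {V : Type u} [AddCommGroup V] [Module ℚ V] (σ F : Set V) : Prop :=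
  ∃ φ : V →ₗ[ℚ] ℚ, (∀ x ∈ σ, 0 ≤ φ x) ∧ F = {x | x ∈ σ ∧ φ x = 0}

/-- `v₁, …, v_k` are `ℚ`-linearly independent from `w₁, …, w_s`. -/
def RelSimplicial {V : Type u} [AddCommGroup V] [Module ℚ V] {k s : ℕ}
    (v : Fin k → V) (w : Fin s → V) : Prop :=
  ∀ (c : Fin k → ℚ) (d : Fin s → ℚ),
    (∑ i, c i • v i) + ∑ j, d j • w j = 0 → ∀ i, c i = 0

/-- A cone (given as a subset, with its lattice) is irreducible if it admits no direct sum
decomposition `F = F₁ ⊕ ρ₁` in which `ρ₁` is a regular cone of positive dimension. -/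
def IsIrreducibleCone {V : Type u} [AddCommGroup V] [Module ℚ V] (N : Submodule ℤ V)
    (F : Set V) : Prop :=
  ¬ ∃ (m l : ℕ) (t : Fin m → V) (r : Fin l → V), 0 < l ∧
      IsRegularCone N r ∧
      F = coneSpan (Fin.append t r) ∧
      latticeOfSet N F = latticeOf N t ⊔ latticeOf N r ∧
      Disjoint (latticeOf N t) (latticeOf N r)

namespace ConeAux

variable {V : Type u} [AddCommGroup V] [Module ℚ V]

lemma zero_mem_coneSpan {k : ℕ} (v : Fin k → V) : (0 : V) ∈ coneSpan v :=
  ⟨0, fun _ => le_refl 0, by simp⟩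

lemma add_mem_coneSpan {k : ℕ} {v : Fin k → V} {x y : V}
    (hx : x ∈ coneSpan v) (hy : y ∈ coneSpan v) : x + y ∈ coneSpan v := by
  obtain ⟨c, hc, rfl⟩ := hx
  obtain ⟨d, hd, rfl⟩ := hy
  exact ⟨c + d, fun i => add_nonneg (hc i) (hd i), by
    simp [add_smul, Finset.sum_add_distrib]⟩

lemma smul_mem_coneSpan {k : ℕ} {v : Fin k → V} {x : V} {a : ℚ}
    (ha : 0 ≤ a) (hx : x ∈ coneSpan v) : a • x ∈ coneSpan v := by
  obtain ⟨c, hc, rfl⟩ := hx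
  exact ⟨a • c, fun i => mul_nonneg ha (hc i), by
    simp [Finset.smul_sum, smul_smul]⟩

lemma gen_mem_coneSpan {k : ℕ} (v : Fin k → V) (i : Fin k) : v i ∈ coneSpan v := by
  refine ⟨Pi.single i 1, ?_, ?_⟩
  · intro j
    rcases eq_or_ne j i with rfl | h
    · simp
    · simp [Pi.single_apply, h]
  · rw [Finset.sum_eq_single i]
    · simp
    · intro j _ hj; simp [Pi.single_apply, hj]
    · simp

lemma coneSpan_subset_span {k : ℕ} (v : Fin k → V) :
    coneSpan v ⊆ (Submodule.span ℚ (Set.range v) : Submodule ℚ V) := by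
  rintro x ⟨c, _, rfl⟩
  exact Submodule.sum_mem _ fun i _ =>
    Submodule.smul_mem _ _ (Submodule.subset_span ⟨i, rfl⟩)

lemma coneSpan_castSucc_subset {m : ℕ} (u : Fin (m + 1) → V) :
    coneSpan (u ∘ Fin.castSucc) ⊆ coneSpan u := by
  rintro x ⟨c, hc, rfl⟩
  refine ⟨Fin.snoc c 0, ?_, ?_⟩
  · intro i
    induction i using Fin.lastCases with
    | last => simp
    | cast j => simp [hc j]
  · rw [Fin.sum_univ_castSucc]
    simp

/-- Farkas-type lemma over ℚ: a point outside a finitely generated cone can be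
separated from it by a linear functional. -/
lemma farkas : ∀ (m : ℕ) (u : Fin m → V) (x : V), x ∉ coneSpan u →
    ∃ θ : V →ₗ[ℚ] ℚ, (∀ i, 0 ≤ θ (u i)) ∧ θ x < 0 := by
  intro m
  induction m with
  | zero =>
    intro u x hx
    have hx0 : x ≠ 0 := by rintro rfl; exact hx (zero_mem_coneSpan u)
    have h : ¬ ∀ φ : Module.Dual ℚ V, φ x = 0 := by
      rw [Module.forall_dual_apply_eq_zero_iff ℚ x]; exact hx0
    push_neg at h
    obtain ⟨f, hf⟩ := h
    refine ⟨(-(f x)) • f, fun i => i.elim0, ?_⟩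
    simp only [LinearMap.smul_apply, smul_eq_mul, neg_mul]
    have : 0 < f x * f x := mul_self_pos.mpr hf
    linarith
  | succ m ih =>
    intro u x hx
    set p := u (Fin.last m) with hp
    by_cases hx' : x ∈ coneSpan (u ∘ Fin.castSucc)
    · exact absurd (coneSpan_castSucc_subset u hx') hx
    obtain ⟨θ, hθ1, hθ2⟩ := ih (u ∘ Fin.castSucc) x hx'
    by_cases hθp : 0 ≤ θ p
    · refine ⟨θ, ?_, hθ2⟩
      intro i
      induction i using Fin.lastCases with
      | last => exact hθp
      | cast j => exact hθ1 j
    push_neg at hθp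
    have hθpne : θ p ≠ 0 := ne_of_lt hθp
    -- project onto the kernel of θ along p
    set u'' : Fin m → V := fun j => u (Fin.castSucc j) - (θ (u (Fin.castSucc j)) / θ p) • p
      with hu''
    set x'' : V := x - (θ x / θ p) • p with hx''def
    have hx'' : x'' ∉ coneSpan u'' := by
      rintro ⟨c, hc, hsum⟩
      apply hx
      have key : ∑ j, c j • u'' j =
          (∑ j, c j • u (Fin.castSucc j)) - (∑ j, c j * (θ (u (Fin.castSucc j)) / θ p)) • p := by
        rw [Finset.sum_smul]
        simp only [hu'', smul_sub, smul_smul]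
        rw [Finset.sum_sub_distrib]
      set A : ℚ := ∑ j, c j * (θ (u (Fin.castSucc j)) / θ p) with hA
      set μ : ℚ := θ x / θ p - A with hμ
      have hxeq : x = (∑ j, c j • u (Fin.castSucc j)) + μ • p := by
        have h1 : x - (θ x / θ p) • p = (∑ j, c j • u (Fin.castSucc j)) - A • p := by
          rw [← key, ← hsum]
        have h2 : x = (∑ j, c j • u (Fin.castSucc j)) - A • p + (θ x / θ p) • p := by
          rw [← h1]; abel
        rw [h2, hμ, sub_smul]; abel
      have hμ0 : 0 ≤ μ := by
        have hAeq : A = (∑ j, c j * θ (u (Fin.castSucc j))) / θ p := by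
          rw [hA, Finset.sum_div]
          exact Finset.sum_congr rfl fun j _ => (mul_div_assoc _ _ _).symm
        have hμeq : μ = (θ x - ∑ j, c j * θ (u (Fin.castSucc j))) / θ p := by
          rw [hμ, hAeq, div_sub_div_same]
        have hnum : θ x - ∑ j, c j * θ (u (Fin.castSucc j)) < 0 := by
          have hsumnn : 0 ≤ ∑ j, c j * θ (u (Fin.castSucc j)) :=
            Finset.sum_nonneg fun j _ => mul_nonneg (hc j) (hθ1 j)
          linarith
        rw [hμeq]
        exact le_of_lt (div_pos_of_neg_of_neg hnum hθp)
      refine ⟨Fin.snoc c μ, ?_, ?_⟩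
      · intro i
        induction i using Fin.lastCases with
        | last => simpa using hμ0
        | cast j => simpa using hc j
      · rw [Fin.sum_univ_castSucc]
        simpa using hxeq
    obtain ⟨θ', hθ'1, hθ'2⟩ := ih u'' x'' hx''
    refine ⟨θ' - (θ' p / θ p) • θ, ?_, ?_⟩
    · intro i
      induction i using Fin.lastCases with
      | last =>
        simp only [LinearMap.sub_apply, LinearMap.smul_apply, smul_eq_mul]
        rw [div_mul_cancel₀ _ hθpne]
        simp [hp]
      | cast j =>
        have h := hθ'1 j
        simp only [hu'', map_sub, map_smul, smul_eq_mul] at h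
        simp only [LinearMap.sub_apply, LinearMap.smul_apply, smul_eq_mul,
          Function.comp_apply]
        have heq : θ' (u (Fin.castSucc j)) - θ' p / θ p * θ (u (Fin.castSucc j)) =
            θ' (u (Fin.castSucc j)) - θ (u (Fin.castSucc j)) / θ p * θ' p := by ring
        rw [heq]; exact h
    · simp only [LinearMap.sub_apply, LinearMap.smul_apply, smul_eq_mul]
      have h := hθ'2
      simp only [hx''def, map_sub, map_smul, smul_eq_mul] at h
      have heq : θ' x - θ' p / θ p * θ x = θ' x - θ x / θ p * θ' p := by ring
      rw [heq]; exact h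

/-- A strictly convex finitely generated cone with nonzero generators admits a linear
functional which is positive on all generators. -/
lemma exists_pos_functional : ∀ (n : ℕ) (u : Fin n → V), StrictlyConvexCone u →
    (∀ i, u i ≠ 0) → ∃ χ : V →ₗ[ℚ] ℚ, ∀ i, 0 < χ (u i) := by
  intro n
  induction n with
  | zero => exact fun u _ _ => ⟨0, fun i => i.elim0⟩
  | succ n ih =>
    intro u hsc hne
    have hsc' : StrictlyConvexCone (u ∘ Fin.castSucc) := fun x hx hnx =>
      hsc x (coneSpan_castSucc_subset u hx) (coneSpan_castSucc_subset u hnx)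
    obtain ⟨χ, hχ⟩ := ih (u ∘ Fin.castSucc) hsc' (fun j => hne _)
    set p := u (Fin.last n) with hp
    have hnp : -p ∉ coneSpan (u ∘ Fin.castSucc) := by
      intro h
      exact hne (Fin.last n) (hsc p (gen_mem_coneSpan u _) (coneSpan_castSucc_subset u h))
    obtain ⟨θ, hθ1, hθ2⟩ := farkas n (u ∘ Fin.castSucc) (-p) hnp
    have hθp : 0 < θ p := by simpa using hθ2
    set δ : ℚ := (|χ p| + 1) / θ p with hδ
    have hδ0 : 0 < δ := div_pos (by positivity) hθp
    refine ⟨δ • θ + χ, ?_⟩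
    intro i
    induction i using Fin.lastCases with
    | last =>
      simp only [LinearMap.add_apply, LinearMap.smul_apply, smul_eq_mul, ← hp]
      rw [hδ, div_mul_cancel₀ _ (ne_of_gt hθp)]
      have := neg_abs_le (χ p)
      linarith
    | cast j =>
      have h1 := hθ1 j
      have h2 := hχ j
      simp only [Function.comp_apply] at h1 h2
      simp only [LinearMap.add_apply, LinearMap.smul_apply, smul_eq_mul]
      nlinarith

/-- For a finitely generated lattice `N` there is a common denominator `b` clearing the
values of `χ` on `N`. -/
lemma exists_denom (N : Submodule ℤ V) [Module.Finite ℤ ↥N] (χ : V →ₗ[ℚ] ℚ) :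
    ∃ b : ℕ, 0 < b ∧ ∀ x ∈ N, ∃ z : ℤ, (b : ℚ) * χ x = (z : ℚ) := by
  obtain ⟨S, hS⟩ := Module.Finite.fg_top (R := ℤ) (M := ↥N)
  set b : ℕ := ∏ t ∈ S, (χ (t : V)).den with hb
  refine ⟨b, Finset.prod_pos fun t _ => (χ (t : V)).pos, ?_⟩
  set M : Submodule ℤ V :=
    { carrier := {x : V | ∃ z : ℤ, (b : ℚ) * χ x = (z : ℚ)}
      add_mem' := by
        rintro x y ⟨z1, hz1⟩ ⟨z2, hz2⟩
        exact ⟨z1 + z2, by rw [map_add, mul_add, hz1, hz2]; push_cast; ring⟩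
      zero_mem' := ⟨0, by simp⟩
      smul_mem' := by
        rintro n x ⟨z, hz⟩
        refine ⟨n * z, ?_⟩
        have hzs : χ ((n : ℤ) • x) = (n : ℚ) * χ x := by rw [map_zsmul, zsmul_eq_mul]
        rw [hzs, mul_left_comm, hz]
        norm_cast } with hM
  classical
  have hNM : N ≤ M := by
    have h1 : N = Submodule.map N.subtype ⊤ := by simp
    rw [h1, ← hS, Submodule.map_span]
    apply Submodule.span_le.mpr
    rintro _ ⟨t, ht, rfl⟩
    have htS : t ∈ S := by simpa using ht
    classical
    refine ⟨(∏ t' ∈ S.erase t, ((χ (t' : V)).den : ℤ)) * (χ (t : V)).num, ?_⟩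
    have hbsplit : b = (χ (t : V)).den * ∏ t' ∈ S.erase t, (χ (t' : V)).den :=
      (Finset.mul_prod_erase S _ htS).symm
    have hsub : N.subtype t = (t : V) := rfl
    have hden : ((χ (t : V)).den : ℚ) * χ (t : V) = ((χ (t : V)).num : ℚ) := by
      rw [mul_comm, Rat.mul_den_eq_num]
    rw [hsub, hbsplit]
    push_cast
    rw [mul_assoc, mul_comm, mul_assoc, mul_comm (χ (t : V)), hden]
  exact fun x hx => hNM hx

end ConeAux


namespace ConeAux
variable {V : Type u} [AddCommGroup V] [Module ℚ V]

lemma sum_mem_coneSpan {k : ℕ} {v : Fin k → V} {ι : Type*} (s : Finset ι) (f : ι → V)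
    (h : ∀ i ∈ s, f i ∈ coneSpan v) : ∑ i ∈ s, f i ∈ coneSpan v :=
  Finset.sum_induction f (· ∈ coneSpan v) (fun _ _ ha hb => add_mem_coneSpan ha hb)
    (zero_mem_coneSpan v) h

lemma natCast_smul_mem {N : Submodule ℤ V} {x : V} (hx : x ∈ N) (n : ℕ) :
    (n : ℚ) • x ∈ N := by
  rw [show ((n : ℚ)) = (((n : ℤ) : ℚ)) by push_cast; ring, Int.cast_smul_eq_zsmul]
  exact N.smul_mem _ hx

lemma intCast_smul_mem {N : Submodule ℤ V} {x : V} (hx : x ∈ N) (n : ℤ) :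
    (n : ℚ) • x ∈ N := by
  rw [Int.cast_smul_eq_zsmul]
  exact N.smul_mem _ hx

end ConeAux


open ConeAux in
/-- If a relatively simplicial pair `(σ, ω)` with
`σ = ⟨v₁,…,v_k, w₁,…,w_s⟩` and `ω = ⟨w₁,…,w_s⟩` a face of `σ` has no minimal vector
(i.e. every minimal vector of `σ` lies in `ω`), then the pair is regular:
`N_σ = ℤv₁ ⊕ … ⊕ ℤv_k ⊕ N_ω` and the monoid `σ ∩ N_σ` equals
`ℕv₁ + … + ℕv_k + (ω ∩ N_ω)`. -/
theorem relative_regular_of_no_relative_minimal_vectors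
    {V : Type u} [AddCommGroup V] [Module ℚ V] (N : Submodule ℤ V) [Module.Finite ℤ ↥N]
    {k s : ℕ} (v : Fin k → V) (w : Fin s → V)
    (hsc : StrictlyConvexCone (Fin.append v w))
    (hface : IsFaceOf (coneSpan (Fin.append v w)) (coneSpan w))
    (hrel : RelSimplicial v w)
    (hprim : ∀ idx, IsPrimitive N (Fin.append v w idx))
    (hnomin : ∀ x : V, IsMinimalVec N (Fin.append v w) x → x ∈ coneSpan w) :
    latticeOf N (Fin.append v w) = Submodule.span ℤ (Set.range v) ⊔ latticeOf N w
      ∧ Disjoint (Submodule.span ℤ (Set.range v)) (latticeOf N w)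
      ∧ ∀ x : V, (x ∈ coneSpan (Fin.append v w) ∧ x ∈ N) ↔
          ∃ (c : Fin k → ℕ) (y : V), y ∈ coneSpan w ∧ y ∈ N ∧
            x = (∑ i, (c i : ℚ) • v i) + y := by
  classical
  set u := Fin.append v w with hu
  have hune : ∀ idx, u idx ≠ 0 := fun idx => (hprim idx).2.1
  have huN : ∀ idx, u idx ∈ N := fun idx => (hprim idx).1
  obtain ⟨χ, hχ⟩ := ConeAux.exists_pos_functional (k + s) u hsc hune
  obtain ⟨b, hb0, hbint⟩ := ConeAux.exists_denom N χ
  have hχnn : ∀ x ∈ coneSpan u, 0 ≤ χ x := by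
    rintro x ⟨c, hc, rfl⟩
    rw [map_sum]
    exact Finset.sum_nonneg fun i _ => by
      rw [map_smul, smul_eq_mul]; exact mul_nonneg (hc i) (hχ i).le
  have hχpos : ∀ x ∈ coneSpan u, x ≠ 0 → 0 < χ x := by
    rintro x ⟨c, hc, rfl⟩ hx0
    have hex : ∃ i, 0 < c i := by
      by_contra h
      push_neg at h
      refine hx0 ?_
      have hc0 : ∀ i, c i = 0 := fun i => le_antisymm (h i) (hc i)
      simp [hc0]
    obtain ⟨i, hi⟩ := hex
    rw [map_sum]
    refine Finset.sum_pos' (fun j _ => ?_) ⟨i, Finset.mem_univ i, ?_⟩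
    · rw [map_smul, smul_eq_mul]; exact mul_nonneg (hc j) (hχ j).le
    · rw [map_smul, smul_eq_mul]; exact mul_pos hi (hχ i)
  have hone : ∀ x, x ∈ coneSpan u → x ∈ N → x ≠ 0 → (1 : ℚ) ≤ (b : ℚ) * χ x := by
    intro x hxc hxN hx0
    obtain ⟨z, hz⟩ := hbint x hxN
    have hpos : (0 : ℚ) < (b : ℚ) * χ x :=
      mul_pos (by exact_mod_cast hb0) (hχpos x hxc hx0)
    rw [hz] at hpos ⊢
    have : (0 : ℤ) < z := by exact_mod_cast hpos
    exact_mod_cast this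
  have hwsubset : coneSpan w ⊆ coneSpan u := by
    rintro x ⟨d, hd, rfl⟩
    refine ⟨Fin.append 0 d, ?_, ?_⟩
    · intro i
      induction i using Fin.addCases with
      | left i => simp [Fin.append_left]
      | right j => simpa [Fin.append_right] using hd j
    · rw [Fin.sum_univ_add]
      simp [hu, Fin.append_left, Fin.append_right]
  have hvmem : ∀ i, v i ∈ coneSpan u := fun i => by
    have := gen_mem_coneSpan u (Fin.castAdd s i)
    rwa [hu, Fin.append_left] at this
  have hwmemN : ∀ j, w j ∈ N := fun j => by
    have := huN (Fin.natAdd k j)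
    rwa [hu, Fin.append_right] at this
  have hvmemN : ∀ i, v i ∈ N := fun i => by
    have := huN (Fin.castAdd s i)
    rwa [hu, Fin.append_left] at this
  -- The key descent argument.
  have key : ∀ n : ℕ, ∀ x : V, x ∈ coneSpan u → x ∈ N → (b : ℚ) * χ x ≤ n →
      ∃ (c : Fin k → ℕ) (y : V), y ∈ coneSpan w ∧ y ∈ N ∧
        x = (∑ i, (c i : ℚ) • v i) + y := by
    intro n
    induction n with
    | zero =>
      intro x hxc hxN hle
      have hx0 : x = 0 := by
        by_contra h
        have := hone x hxc hxN h
        norm_num at hle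
        linarith
      exact ⟨0, 0, zero_mem_coneSpan w, N.zero_mem, by simp [hx0]⟩
    | succ n ih =>
      intro x hxc hxN hle
      by_cases hxw : x ∈ coneSpan w
      · exact ⟨0, x, hxw, hxN, by simp⟩
      by_cases hxv : ∃ i, x = v i
      · obtain ⟨i, rfl⟩ := hxv
        refine ⟨Pi.single i 1, 0, zero_mem_coneSpan w, N.zero_mem, ?_⟩
        rw [add_zero, Finset.sum_eq_single i]
        · simp
        · intro j _ hj; simp [Pi.single_apply, hj]
        · simp
      have hx0 : x ≠ 0 := fun h => hxw (h ▸ zero_mem_coneSpan w)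
      have hvert : ∀ idx, x ≠ u idx := by
        intro idx
        induction idx using Fin.addCases with
        | left i =>
          rw [hu, Fin.append_left]
          exact fun h => hxv ⟨i, h⟩
        | right j =>
          rw [hu, Fin.append_right]
          exact fun h => hxw (h ▸ gen_mem_coneSpan w j)
      have hsplit : ∃ y z : V, y ∈ coneSpan u ∧ y ∈ N ∧ y ≠ 0 ∧
          z ∈ coneSpan u ∧ z ∈ N ∧ z ≠ 0 ∧ x = y + z := by
        by_contra h
        exact hxw (hnomin x ⟨hxc, hxN, hx0, hvert, h⟩)
      obtain ⟨y, z, hyc, hyN, hy0, hzc, hzN, hz0, rfl⟩ := hsplit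
      have hy1 := hone y hyc hyN hy0
      have hz1 := hone z hzc hzN hz0
      have hadd : (b : ℚ) * χ (y + z) = (b : ℚ) * χ y + (b : ℚ) * χ z := by
        rw [map_add]; ring
      have hyle : (b : ℚ) * χ y ≤ n := by
        rw [hadd] at hle; push_cast at hle ⊢; linarith
      have hzle : (b : ℚ) * χ z ≤ n := by
        rw [hadd] at hle; push_cast at hle ⊢; linarith
      obtain ⟨cy, y', hy'c, hy'N, hyeq⟩ := ih y hyc hyN hyle
      obtain ⟨cz, z', hz'c, hz'N, hzeq⟩ := ih z hzc hzN hzle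
      refine ⟨cy + cz, y' + z', add_mem_coneSpan hy'c hz'c, N.add_mem hy'N hz'N, ?_⟩
      rw [hyeq, hzeq]
      have : ∑ i, ((cy + cz) i : ℚ) • v i =
          (∑ i, (cy i : ℚ) • v i) + ∑ i, (cz i : ℚ) • v i := by
        rw [← Finset.sum_add_distrib]
        refine Finset.sum_congr rfl fun i _ => ?_
        rw [Pi.add_apply, Nat.cast_add, add_smul]
      rw [this]; abel
  have claim3 : ∀ x : V, (x ∈ coneSpan u ∧ x ∈ N) ↔
      ∃ (c : Fin k → ℕ) (y : V), y ∈ coneSpan w ∧ y ∈ N ∧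
        x = (∑ i, (c i : ℚ) • v i) + y := by
    intro x
    constructor
    · rintro ⟨hxc, hxN⟩
      exact key ⌈(b : ℚ) * χ x⌉₊ x hxc hxN (Nat.le_ceil _)
    · rintro ⟨c, y, hyc, hyN, rfl⟩
      constructor
      · refine add_mem_coneSpan (sum_mem_coneSpan _ _ fun i _ => ?_) (hwsubset hyc)
        exact smul_mem_coneSpan (by positivity) (hvmem i)
      · exact N.add_mem (Submodule.sum_mem N fun i _ => natCast_smul_mem (hvmemN i) (c i))
          hyN
  refine ⟨?_, ?_, claim3⟩
  · -- lattice equality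
    apply le_antisymm
    · intro x hx
      simp only [latticeOf, Submodule.mem_inf, Submodule.restrictScalars_mem] at hx
      obtain ⟨hxN, hxspan⟩ := hx
      rw [Submodule.mem_span_range_iff_exists_fun] at hxspan
      obtain ⟨r, hr⟩ := hxspan
      set M : ℕ := ⌈∑ j, |r j|⌉₊ with hM
      have hMr : ∀ i, 0 ≤ r i + (M : ℚ) := by
        intro i
        have h1 : |r i| ≤ ∑ j, |r j| :=
          Finset.single_le_sum (fun j _ => abs_nonneg (r j)) (Finset.mem_univ i)
        have h2 : (∑ j, |r j|) ≤ (M : ℚ) := Nat.le_ceil _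
        have h3 := neg_abs_le (r i)
        linarith
      set x' : V := x + (M : ℚ) • ∑ i, u i with hx'
      have hx'c : x' ∈ coneSpan u := by
        refine ⟨fun i => r i + (M : ℚ), hMr, ?_⟩
        rw [hx', ← hr, Finset.smul_sum, ← Finset.sum_add_distrib]
        exact Finset.sum_congr rfl fun i _ => by rw [add_smul]
      have hx'N : x' ∈ N := by
        refine N.add_mem hxN (natCast_smul_mem (Submodule.sum_mem N fun i _ => huN i) M)
      obtain ⟨c, y, hyc, hyN, hx'eq⟩ := (claim3 x').mp ⟨hx'c, hx'N⟩
      have husum : ∑ i, u i = (∑ i, v i) + ∑ j, w j := by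
        rw [hu, Fin.sum_univ_add]
        simp [Fin.append_left, Fin.append_right]
      rw [Submodule.mem_sup]
      refine ⟨∑ i, ((c i : ℤ) - (M : ℤ)) • v i, ?_, y - (M : ℚ) • ∑ j, w j, ?_, ?_⟩
      · exact Submodule.sum_mem _ fun i _ =>
          Submodule.smul_mem _ _ (Submodule.subset_span ⟨i, rfl⟩)
      · simp only [latticeOf, Submodule.mem_inf, Submodule.restrictScalars_mem]
        constructor
        · exact N.sub_mem hyN (natCast_smul_mem (Submodule.sum_mem N fun j _ => hwmemN j) M)
        · refine Submodule.sub_mem _ (coneSpan_subset_span w hyc) ?_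
          exact Submodule.smul_mem _ _ (Submodule.sum_mem _ fun j _ =>
            Submodule.subset_span ⟨j, rfl⟩)
      · have hxx : x = x' - (M : ℚ) • ∑ i, u i := by rw [hx']; abel
        rw [hxx, hx'eq, husum, smul_add]
        have hsum1 : ∑ i, ((c i : ℤ) - (M : ℤ)) • v i =
            (∑ i, (c i : ℚ) • v i) - (M : ℚ) • ∑ i, v i := by
          rw [Finset.smul_sum, ← Finset.sum_sub_distrib]
          refine Finset.sum_congr rfl fun i _ => ?_
          rw [← Int.cast_smul_eq_zsmul ℚ ((c i : ℤ) - (M : ℤ)) (v i)]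
          push_cast
          rw [sub_smul]
        rw [hsum1]
        abel
    · refine sup_le ?_ ?_
      · rw [Submodule.span_le]
        rintro _ ⟨i, rfl⟩
        simp only [latticeOf, Submodule.mem_inf, Submodule.restrictScalars_mem,
          SetLike.mem_coe]
        exact ⟨hvmemN i, Submodule.subset_span ⟨Fin.castAdd s i, by rw [hu, Fin.append_left]⟩⟩
      · intro x hxmem
        simp only [latticeOf, Submodule.mem_inf, Submodule.restrictScalars_mem] at hxmem ⊢
        obtain ⟨hxN, hxsp⟩ := hxmem
        refine ⟨hxN, Submodule.span_mono ?_ hxsp⟩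
        rintro _ ⟨j, rfl⟩
        exact ⟨Fin.natAdd k j, by rw [hu, Fin.append_right]⟩
  · -- disjointness
    rw [Submodule.disjoint_def]
    intro x hxv hxw
    simp only [latticeOf, Submodule.mem_inf, Submodule.restrictScalars_mem] at hxw
    obtain ⟨hxN, hxspan⟩ := hxw
    rw [Submodule.mem_span_range_iff_exists_fun] at hxv
    obtain ⟨a, ha⟩ := hxv
    rw [Submodule.mem_span_range_iff_exists_fun] at hxspan
    obtain ⟨d, hd⟩ := hxspan
    have hzero : (∑ i, ((a i : ℚ)) • v i) + ∑ j, (-(d j)) • w j = 0 := by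
      have h1 : ∑ i, ((a i : ℚ)) • v i = x := by
        rw [← ha]
        exact Finset.sum_congr rfl fun i _ => by rw [Int.cast_smul_eq_zsmul]
      have h2 : ∑ j, (-(d j)) • w j = -x := by
        rw [← hd, ← Finset.sum_neg_distrib]
        exact Finset.sum_congr rfl fun j _ => by rw [neg_smul]
      rw [h1, h2]; abel
    have hazero : ∀ i, (a i : ℚ) = 0 := hrel _ _ hzero
    have ha0 : ∀ i, a i = 0 := fun i => by exact_mod_cast hazero i
    rw [← ha]
    simp [ha0]
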